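/- Let p be prime, let A, B be subsets of Z_p of cardinalities s, t ≥ 1, and let S_i be as in Pollard's theorem. Then for every j with 1 ≤ j ≤ min(s,t), r(A,B,B) ≥ j · min(p, s+t−j) − j(p−t). -/

import Mathlib

set_option linter.unusedSectionVars false
set_option maxHeartbeats 1000000
open Finset

section PollardAux
variable {p : ℕ} [NeZero p]

def rrr (A B : Finset (ZMod p)) (c : ZMod p) : ℕ := (A.filter fun a => c - a ∈ B).card
def NNN (j : ℕ) (A B : Finset (ZMod p)) : ℕ := ∑ c : ZMod p, min j (rrr A B c)
def ggg (A B : Finset (ZMod p)) (e : ZMod p) : ℕ := (A.filter fun a => a - e ∈ B).card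

variable {A B : Finset (ZMod p)} {c e : ZMod p} {j : ℕ}

lemma rrr_le_left : rrr A B c ≤ A.card := card_le_card (filter_subset _ _)

lemma rrr_symm : rrr A B c = rrr B A c := by
  apply Finset.card_bij' (fun a _ => c - a) (fun b _ => c - b)
  · intro a ha
    simp only [mem_filter] at ha ⊢
    exact ⟨ha.2, by simpa [sub_sub_cancel] using ha.1⟩
  · intro b hb
    simp only [mem_filter] at hb ⊢
    exact ⟨hb.2, by simpa [sub_sub_cancel] using hb.1⟩
  · intro a _; simp [sub_sub_cancel]
  · intro b _; simp [sub_sub_cancel]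

lemma rrr_le_right : rrr A B c ≤ B.card := by
  rw [rrr_symm]; exact card_le_card (filter_subset _ _)

lemma card_univ_filter_sub (a : ZMod p) :
    ((univ : Finset (ZMod p)).filter fun c => c - a ∈ B).card = B.card := by
  apply Finset.card_bij' (fun c _ => c - a) (fun b _ => b + a)
  · intro x hx; simpa using (mem_filter.mp hx).2
  · intro b hb
    refine mem_filter.mpr ⟨mem_univ _, ?_⟩
    simpa using hb
  · intro x _; simp
  · intro b _; simp

lemma rrr_univ_left : rrr (univ : Finset (ZMod p)) B c = B.card := by
  rw [rrr_symm, rrr]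
  simp

lemma sum_rrr : ∑ c : ZMod p, rrr A B c = A.card * B.card := by
  have h : ∀ c : ZMod p, rrr A B c = ∑ a ∈ A, if c - a ∈ B then 1 else 0 := by
    intro c; rw [rrr, card_filter]
  simp only [h]
  rw [Finset.sum_comm]
  have h2 : ∀ a ∈ A, (∑ c : ZMod p, if c - a ∈ B then 1 else 0) = B.card := by
    intro a _
    rw [← card_filter]
    exact card_univ_filter_sub a
  rw [Finset.sum_congr rfl h2, Finset.sum_const, smul_eq_mul]

lemma ggg_symm : (B.filter fun b => b + e ∈ A).card = ggg A B e := by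
  apply Finset.card_bij' (fun b _ => b + e) (fun a _ => a - e)
  · intro b hb
    simp only [mem_filter] at hb ⊢
    exact ⟨hb.2, by simpa using hb.1⟩
  · intro a ha
    simp only [mem_filter] at ha ⊢
    exact ⟨ha.2, by simpa using ha.1⟩
  · intro b _; simp
  · intro a _; simp

lemma ggg_le_left : ggg A B e ≤ A.card := card_le_card (filter_subset _ _)

lemma ggg_le_right : ggg A B e ≤ B.card := by
  rw [← ggg_symm]; exact card_le_card (filter_subset _ _)

lemma rrr_compl_add : rrr A Bᶜ c + rrr A B c = A.card := by
  have h : (A.filter fun a => c - a ∈ Bᶜ) = A.filter fun a => ¬ (c - a ∈ B) := by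
    apply filter_congr; intro a _; simp
  rw [rrr, rrr, h, add_comm]
  exact card_filter_add_card_filter_not _

lemma transfer_rrr_le :
    rrr (A.filter fun a => a - e ∈ B) (B ∪ A.image (fun a => a - e)) c ≤ rrr A B c := by
  apply Finset.card_le_card_of_injOn (fun w => if c - w ∈ B then w else c + e - w)
  · intro w hw
    simp only [rrr, mem_coe, mem_filter, mem_union, mem_image] at hw ⊢
    obtain ⟨⟨hwA, hweB⟩, hc⟩ := hw
    by_cases hcb : c - w ∈ B
    · rw [if_pos hcb]; exact ⟨hwA, hcb⟩
    · rw [if_neg hcb]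
      rcases hc with hcb' | ⟨a, haA, hae⟩
      · exact absurd hcb' hcb
      · have ha' : a = c + e - w := by linear_combination hae
        constructor
        · rw [← ha']; exact haA
        · have h9 : c - (c + e - w) = w - e := by ring
          rw [h9]; exact hweB
  · intro w1 hw1 w2 hw2 heq
    simp only [rrr, mem_filter, mem_union, mem_image, coe_filter, Set.mem_setOf_eq] at hw1 hw2
    dsimp only at heq
    by_cases h1 : c - w1 ∈ B <;> by_cases h2 : c - w2 ∈ B
    · rwa [if_pos h1, if_pos h2] at heq
    · rw [if_pos h1, if_neg h2] at heq
      exfalso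
      apply h2
      have h9 : c - w2 = w1 - e := by linear_combination - heq
      rw [h9]
      exact hw1.1.2
    · rw [if_neg h1, if_pos h2] at heq
      exfalso
      apply h1
      have h9 : c - w1 = w2 - e := by linear_combination heq
      rw [h9]
      exact hw2.1.2
    · rw [if_neg h1, if_neg h2] at heq
      linear_combination - heq

lemma NNN_transfer_le :
    NNN j (A.filter fun a => a - e ∈ B) (B ∪ A.image (fun a => a - e)) ≤ NNN j A B := by
  apply Finset.sum_le_sum
  intro c _
  exact min_le_min le_rfl transfer_rrr_le

lemma NNN_compl (hj : j ≤ A.card) :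
    NNN j A B + Fintype.card (ZMod p) * A.card
      = NNN (A.card - j) A Bᶜ + Fintype.card (ZMod p) * j + A.card * B.card := by
  have key : ∀ c : ZMod p,
      min j (rrr A B c) + A.card = min (A.card - j) (rrr A Bᶜ c) + j + rrr A B c := by
    intro c
    have h1 : rrr A B c ≤ A.card := rrr_le_left
    have h2 : rrr A Bᶜ c + rrr A B c = A.card := rrr_compl_add
    omega
  have L : ∑ c : ZMod p, (min j (rrr A B c) + A.card)
      = NNN j A B + Fintype.card (ZMod p) * A.card := by
    rw [Finset.sum_add_distrib, Finset.sum_const, card_univ, smul_eq_mul, NNN, mul_comm]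
  have R : ∑ c : ZMod p, (min (A.card - j) (rrr A Bᶜ c) + j + rrr A B c)
      = NNN (A.card - j) A Bᶜ + Fintype.card (ZMod p) * j + A.card * B.card := by
    rw [Finset.sum_add_distrib, Finset.sum_add_distrib, Finset.sum_const, card_univ,
      smul_eq_mul, sum_rrr, NNN, mul_comm _ j]
  rw [← L, ← R]
  exact Finset.sum_congr rfl (fun c _ => key c)

lemma card_add_card_le_rrr (c : ZMod p) :
    A.card + B.card ≤ Fintype.card (ZMod p) + rrr A B c := by
  set X := (univ : Finset (ZMod p)).filter fun x => c - x ∈ B with hX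
  have hXcard : X.card = B.card := rrr_univ_left
  have hinter : (A ∩ X).card = rrr A B c := by
    rw [rrr]; congr 1; ext a; simp [hX]
  have h1 := card_union_add_card_inter A X
  have h2 : (A ∪ X).card ≤ Fintype.card (ZMod p) := by
    rw [← card_univ]; exact card_le_univ _
  omega

lemma NNN_eq_top (hj : ∀ c : ZMod p, j ≤ rrr A B c) :
    NNN j A B = Fintype.card (ZMod p) * j := by
  rw [NNN, Finset.sum_congr rfl (fun c _ => min_eq_left (hj c)), Finset.sum_const,
    card_univ, smul_eq_mul]

lemma pollard (hp : p.Prime) :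
    ∀ (n : ℕ) (A B : Finset (ZMod p)) (j : ℕ), min A.card B.card ≤ n →
      1 ≤ j → j ≤ A.card → j ≤ B.card →
      j * min p (A.card + B.card - j) ≤ NNN j A B := by
  have hcard : Fintype.card (ZMod p) = p := ZMod.card p
  intro n
  induction n using Nat.strong_induction_on with
  | _ n IH =>
  intro A B j hn hj1 hjA hjB
  have htp : B.card ≤ p := by simpa [card_univ, hcard] using card_le_univ B
  have hsp : A.card ≤ p := by simpa [card_univ, hcard] using card_le_univ A
  by_cases htrunc : p ≤ A.card + B.card - j
  · -- truncated case : every element has ≥ j representations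
    have hr : ∀ c : ZMod p, j ≤ rrr A B c := by
      intro c
      have := card_add_card_le_rrr (A := A) (B := B) c
      omega
    rw [NNN_eq_top hr, hcard, min_eq_left htrunc]
    exact le_of_eq (mul_comm _ _)
  · push_neg at htrunc
    have hmin : min p (A.card + B.card - j) = A.card + B.card - j :=
      min_eq_right (le_of_lt htrunc)
    by_cases hdual : ∃ e : ZMod p, 1 ≤ ggg A B e ∧ ggg A B e + 1 ≤ j
    · -- dual transform move
      obtain ⟨e, hg1, hgj⟩ := hdual
      set g := ggg A B e with hgdef
      set A' := A.filter (fun a => ¬ (a - e ∈ B)) with hA'def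
      set B' := B.filter (fun b => ¬ (b + e ∈ A)) with hB'def
      have hA'c : A'.card + g = A.card := by
        have := card_filter_add_card_filter_not (s := A) (p := fun a => a - e ∈ B)
        rw [hgdef, ggg, hA'def]
        omega
      have hB'c : B'.card + g = B.card := by
        have h3 : (B.filter fun b => b + e ∈ A).card = g := ggg_symm
        have := card_filter_add_card_filter_not (s := B) (p := fun b => b + e ∈ A)
        rw [hB'def]
        omega
      -- IH for (A', B') with parameter j - g
      have hIH : (j - g) * min p (A'.card + B'.card - (j - g)) ≤ NNN (j - g) A' B' := by
        have hlt : min A'.card B'.card < n := by omega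
        exact IH _ hlt A' B' (j - g) le_rfl (by omega) (by omega) (by omega)
      have hmin' : min p (A'.card + B'.card - (j - g)) = A'.card + B'.card - (j - g) := by
        apply min_eq_right; omega
      rw [hmin'] at hIH
      -- identity I1 on (A, B)
      have I1 := NNN_compl (A := A) (B := B) (j := j) hjA
      -- transfer I2 on (A, Bᶜ)
      have I2 : NNN (A.card - j) (A.filter fun a => a - e ∈ Bᶜ)
          (Bᶜ ∪ A.image (fun a => a - e)) ≤ NNN (A.card - j) A Bᶜ := NNN_transfer_le
      have e1 : (A.filter fun a => a - e ∈ Bᶜ) = A' := by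
        rw [hA'def]; apply filter_congr; intro a _; simp
      have e2 : (Bᶜ ∪ A.image (fun a => a - e)) = B'ᶜ := by
        ext x
        simp only [mem_union, mem_compl, mem_image, hB'def, mem_filter, not_and, not_not]
        constructor
        · rintro (hx | ⟨a, haA, rfl⟩)
          · intro hxB; exact absurd hxB hx
          · intro _; simpa using haA
        · intro h
          by_cases hxB : x ∈ B
          · right
            exact ⟨x + e, h hxB, by ring⟩
          · left; exact hxB
      rw [e1, e2] at I2
      -- identity I3 on (A', B')
      have I3 := NNN_compl (A := A') (B := B') (j := j - g) (by omega)
      have hAc' : A'.card - (j - g) = A.card - j := by omega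
      rw [hAc'] at I3
      -- assemble everything
      rw [hmin]
      have hkey : A.card * B.card + (j - g) * (A'.card + B'.card - (j - g))
          = A'.card * B'.card + j * (A.card + B.card - j) := by
        have h1 : (A'.card : ℤ) = (A.card : ℤ) - (g : ℤ) := by omega
        have h2 : (B'.card : ℤ) = (B.card : ℤ) - (g : ℤ) := by omega
        zify [show (j : ℕ) - g ≤ A'.card + B'.card by omega,
          show j ≤ A.card + B.card by omega, show g ≤ j by omega]
        rw [h1, h2]
        ring
      have hC1 : Fintype.card (ZMod p) * A.card
          = Fintype.card (ZMod p) * A'.card + Fintype.card (ZMod p) * g := by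
        rw [← Nat.mul_add]; congr 1; omega
      have hC2 : Fintype.card (ZMod p) * j
          = Fintype.card (ZMod p) * (j - g) + Fintype.card (ZMod p) * g := by
        rw [← Nat.mul_add]; congr 1; omega
      omega
    · by_cases hprim : ∃ e : ZMod p, j ≤ ggg A B e ∧ ggg A B e + 1 ≤ min A.card B.card
      · -- primal transform move
        obtain ⟨e, hge, hgm⟩ := hprim
        set A₂ := A.filter (fun a => a - e ∈ B) with hA₂def
        set B₂ := B ∪ A.image (fun a => a - e) with hB₂def
        have hA₂c : A₂.card = ggg A B e := rfl
        have hB₂c : B₂.card + ggg A B e = B.card + A.card := by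
          have hX : (A.image fun a => a - e).card = A.card :=
            card_image_of_injective _ (sub_left_injective)
          have hBX : (B ∩ A.image fun a => a - e).card = ggg A B e := by
            rw [← ggg_symm]
            congr 1
            ext x
            simp only [mem_inter, mem_image, mem_filter]
            constructor
            · rintro ⟨hxB, a, haA, rfl⟩
              refine ⟨hxB, ?_⟩; simpa using haA
            · rintro ⟨hxB, hxe⟩
              exact ⟨hxB, x + e, hxe, by ring⟩
          have hu := card_union_add_card_inter B (A.image fun a => a - e)
          rw [← hB₂def] at hu
          omega
        have hchain : NNN j A₂ B₂ ≤ NNN j A B := NNN_transfer_le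
        have hjB₂ : j ≤ B₂.card := le_trans hjB (card_le_card subset_union_left)
        have hIH : j * min p (A₂.card + B₂.card - j) ≤ NNN j A₂ B₂ := by
          have hlt : min A₂.card B₂.card < n := by omega
          exact IH _ hlt A₂ B₂ j le_rfl hj1 (by omega) hjB₂
        have hsum : A₂.card + B₂.card = A.card + B.card := by omega
        rw [hsum] at hIH
        exact le_trans hIH hchain
      · -- rigid case
        push_neg at hdual hprim
        have hgval : ∀ e : ZMod p, ggg A B e = 0 ∨ ggg A B e = min A.card B.card := by
          intro e
          have h1 := hdual e
          have h2 := hprim e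
          have h3 : ggg A B e ≤ A.card := ggg_le_left
          have h4 : ggg A B e ≤ B.card := ggg_le_right
          rcases Nat.eq_zero_or_pos (ggg A B e) with h | h
          · left; exact h
          · right
            rcases le_or_gt j (ggg A B e) with h5 | h5
            · have := h2 h5; omega
            · have := h1 h; omega
        have hfull : ∀ a ∈ A, ∀ b ∈ B, ggg A B (a - b) = min A.card B.card := by
          intro a ha b hb
          have hpos : 1 ≤ ggg A B (a - b) := by
            rw [ggg]
            apply card_pos.mpr
            exact ⟨a, mem_filter.mpr ⟨ha, by simpa [sub_sub_cancel] using hb⟩⟩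
          rcases hgval (a - b) with h | h
          · omega
          · exact h
        by_cases hs1 : A.card = 1
        · have hj' : j = 1 := by omega
          subst hj'
          have hrr : ∀ c : ZMod p, min 1 (rrr A B c) = rrr A B c := by
            intro c
            have h5 : rrr A B c ≤ 1 := le_trans rrr_le_left (le_of_eq hs1)
            omega
          have hN : NNN 1 A B = A.card * B.card := by
            rw [NNN, Finset.sum_congr rfl (fun c _ => hrr c), sum_rrr]
          rw [hN, hmin, hs1]
          omega
        by_cases ht1 : B.card = 1
        · have hj' : j = 1 := by omega
          subst hj'
          have hrr : ∀ c : ZMod p, min 1 (rrr A B c) = rrr A B c := by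
            intro c
            have h5 : rrr A B c ≤ 1 := le_trans rrr_le_right (le_of_eq ht1)
            omega
          have hN : NNN 1 A B = A.card * B.card := by
            rw [NNN, Finset.sum_congr rfl (fun c _ => hrr c), sum_rrr]
          rw [hN, hmin, ht1]
          omega
        -- now 2 ≤ A.card and 2 ≤ B.card
        haveI := Fact.mk hp
        by_cases hst : A.card ≤ B.card
        · -- full overlaps mean A ⊆ B + e; derive B = univ
          have hmins : min A.card B.card = A.card := min_eq_left hst
          have hsub : ∀ a ∈ A, ∀ b ∈ B, ∀ x ∈ A, x - (a - b) ∈ B := by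
            intro a ha b hb x hx
            have h2 : (A.filter fun y => y - (a - b) ∈ B).card = A.card := by
              rw [show (A.filter fun y => y - (a - b) ∈ B).card = ggg A B (a - b) from rfl,
                hfull a ha b hb, hmins]
            have h1 : (A.filter fun y => y - (a - b) ∈ B) = A :=
              Finset.eq_of_subset_of_card_le (filter_subset _ _) (le_of_eq h2.symm)
            rw [← h1] at hx
            exact (mem_filter.mp hx).2
          obtain ⟨a₁, ha₁, a₂, ha₂, hne⟩ := Finset.one_lt_card.mp (by omega : 1 < A.card)
          have hBtrans : ∀ b ∈ B, b + (a₂ - a₁) ∈ B := by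
            intro b hb
            have h6 := hsub a₁ ha₁ b hb a₂ ha₂
            have heq : a₂ - (a₁ - b) = b + (a₂ - a₁) := by ring
            rwa [heq] at h6
          have hδ : a₂ - a₁ ≠ 0 := sub_ne_zero.mpr hne.symm
          have horb : ∀ (k : ℕ), ∀ b ∈ B, b + (k : ZMod p) * (a₂ - a₁) ∈ B := by
            intro k
            induction k with
            | zero => intro b hb; simpa using hb
            | succ m ihm =>
              intro b hb
              have h1 := hBtrans _ (ihm b hb)
              have h2 : b + (m : ZMod p) * (a₂ - a₁) + (a₂ - a₁)
                  = b + ((m + 1 : ℕ) : ZMod p) * (a₂ - a₁) := by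
                push_cast; ring
              rwa [h2] at h1
          have hBuniv : B = univ := by
            apply Finset.eq_univ_iff_forall.mpr
            intro c
            obtain ⟨b₀, hb₀⟩ := Finset.card_pos.mp (by omega : 0 < B.card)
            have hk := horb ((c - b₀) * (a₂ - a₁)⁻¹).val b₀ hb₀
            rw [ZMod.natCast_val, ZMod.cast_id] at hk
            have h7 : (c - b₀) * (a₂ - a₁)⁻¹ * (a₂ - a₁) = c - b₀ := by
              field_simp
            rw [h7] at hk
            simpa using hk
          have hrr : ∀ c : ZMod p, j ≤ rrr A B c := by
            intro c
            have h8 : rrr A B c = A.card := by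
              rw [rrr, hBuniv]
              simp
            omega
          rw [NNN_eq_top hrr, hcard]
          calc j * min p (A.card + B.card - j) ≤ j * p :=
                Nat.mul_le_mul_left _ (min_le_left _ _)
            _ = p * j := mul_comm _ _
        · -- B.card < A.card; derive A = univ
          push_neg at hst
          have hmins : min A.card B.card = B.card := min_eq_right (le_of_lt hst)
          have hsub : ∀ a ∈ A, ∀ b ∈ B, ∀ y ∈ B, y + (a - b) ∈ A := by
            intro a ha b hb y hy
            have h2 : (B.filter fun z => z + (a - b) ∈ A).card = B.card := by
              rw [ggg_symm, hfull a ha b hb, hmins]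
            have h1 : (B.filter fun z => z + (a - b) ∈ A) = B :=
              Finset.eq_of_subset_of_card_le (filter_subset _ _) (le_of_eq h2.symm)
            rw [← h1] at hy
            exact (mem_filter.mp hy).2
          obtain ⟨b₁, hb₁, b₂, hb₂, hne⟩ := Finset.one_lt_card.mp (by omega : 1 < B.card)
          have hAtrans : ∀ a ∈ A, a + (b₂ - b₁) ∈ A := by
            intro a ha
            have h6 := hsub a ha b₁ hb₁ b₂ hb₂
            have heq : b₂ + (a - b₁) = a + (b₂ - b₁) := by ring
            rwa [heq] at h6
          have hδ : b₂ - b₁ ≠ 0 := sub_ne_zero.mpr hne.symm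
          have horb : ∀ (k : ℕ), ∀ a ∈ A, a + (k : ZMod p) * (b₂ - b₁) ∈ A := by
            intro k
            induction k with
            | zero => intro a ha; simpa using ha
            | succ m ihm =>
              intro a ha
              have h1 := hAtrans _ (ihm a ha)
              have h2 : a + (m : ZMod p) * (b₂ - b₁) + (b₂ - b₁)
                  = a + ((m + 1 : ℕ) : ZMod p) * (b₂ - b₁) := by
                push_cast; ring
              rwa [h2] at h1
          have hAuniv : A = univ := by
            apply Finset.eq_univ_iff_forall.mpr
            intro c
            obtain ⟨a₀, ha₀⟩ := Finset.card_pos.mp (by omega : 0 < A.card)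
            have hk := horb ((c - a₀) * (b₂ - b₁)⁻¹).val a₀ ha₀
            rw [ZMod.natCast_val, ZMod.cast_id] at hk
            have h7 : (c - a₀) * (b₂ - b₁)⁻¹ * (b₂ - b₁) = c - a₀ := by
              field_simp
            rw [h7] at hk
            simpa using hk
          have hrr : ∀ c : ZMod p, j ≤ rrr A B c := by
            intro c
            have h8 : rrr A B c = B.card := by rw [hAuniv]; exact rrr_univ_left
            omega
          rw [NNN_eq_top hrr, hcard]
          calc j * min p (A.card + B.card - j) ≤ j * p :=
                Nat.mul_le_mul_left _ (min_le_left _ _)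
            _ = p * j := mul_comm _ _
  

lemma count_triples (A B : Finset (ZMod p)) :
    ((A ×ˢ B ×ˢ B).filter (fun x => x.2.2 = x.1 + x.2.1)).card
      = ∑ c ∈ B, rrr A B c := by
  have h1 : ((A ×ˢ B ×ˢ B).filter (fun x => x.2.2 = x.1 + x.2.1)).card
      = ((A ×ˢ B).filter (fun ab => ab.1 + ab.2 ∈ B)).card := by
    refine Finset.card_bij' (fun x _ => (x.1, x.2.1)) (fun y _ => (y.1, y.2, y.1 + y.2))
      ?_ ?_ ?_ ?_
    · rintro ⟨a, b, b2⟩ hx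
      simp only [mem_filter, mem_product] at hx ⊢
      exact ⟨⟨hx.1.1, hx.1.2.1⟩, hx.2 ▸ hx.1.2.2⟩
    · rintro ⟨a, b⟩ hy
      simp only [mem_filter, mem_product] at hy
      exact mem_filter.mpr ⟨mem_product.mpr ⟨hy.1.1, mem_product.mpr ⟨hy.1.2, hy.2⟩⟩, rfl⟩
    · rintro ⟨a, b, b2⟩ hx
      simp only [mem_filter, mem_product] at hx
      simp [Prod.ext_iff, hx.2]
    · rintro ⟨a, b⟩ _
      rfl
  rw [h1]
  rw [Finset.card_eq_sum_card_fiberwise (f := fun ab : ZMod p × ZMod p => ab.1 + ab.2)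
    (s := (A ×ˢ B).filter (fun ab => ab.1 + ab.2 ∈ B)) (t := B) (fun x hx => (mem_filter.mp hx).2)]
  refine Finset.sum_congr rfl (fun c hc => ?_)
  rw [rrr]
  refine Finset.card_bij' (fun ab _ => ab.1) (fun a _ => (a, c - a)) ?_ ?_ ?_ ?_
  · rintro ⟨a, b⟩ hab
    simp only [mem_filter, mem_product] at hab ⊢
    obtain ⟨⟨⟨hA', hB'⟩, _⟩, hsum⟩ := hab
    refine ⟨hA', ?_⟩
    have h9 : c - a = b := by rw [← hsum]; ring
    rw [h9]; exact hB'
  · intro a ha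
    simp only [mem_filter] at ha
    simp only [mem_filter, mem_product]
    refine ⟨⟨⟨ha.1, ha.2⟩, ?_⟩, by ring⟩
    have h9 : a + (c - a) = c := by ring
    rw [h9]; exact hc
  · rintro ⟨a, b⟩ hab
    simp only [mem_filter, mem_product] at hab
    have h9 : c - a = b := by rw [← hab.2]; ring
    simp [Prod.ext_iff, h9]
  · intro a _
    rfl

lemma NNN_le_sum_over (A B : Finset (ZMod p)) (j : ℕ) :
    NNN j A B ≤ (∑ c ∈ B, min j (rrr A B c)) + (Fintype.card (ZMod p) - B.card) * j := by
  rw [NNN, ← Finset.sum_add_sum_compl B (fun c => min j (rrr A B c))]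
  have h2 : ∑ c ∈ Bᶜ, min j (rrr A B c) ≤ (Fintype.card (ZMod p) - B.card) * j := by
    calc ∑ c ∈ Bᶜ, min j (rrr A B c) ≤ ∑ _c ∈ Bᶜ, j :=
          Finset.sum_le_sum (fun c _ => min_le_left _ _)
      _ = (Fintype.card (ZMod p) - B.card) * j := by
          rw [Finset.sum_const, smul_eq_mul, card_compl]
  omega

end PollardAux

/-- r(A,B,B) ≥ j·min(p, s+t−j) − j(p−t) for 1 ≤ j ≤ min(s,t). -/
theorem stmt_4 {p : ℕ} [NeZero p] (hp : p.Prime) {s t : ℕ} (hs : 1 ≤ s) (ht : 1 ≤ t)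
    (A B : Finset (ZMod p)) (hA : A.card = s) (hB : B.card = t)
    (j : ℕ) (hj1 : 1 ≤ j) (hj2 : j ≤ min s t) :
    (j : ℤ) * min (p : ℤ) ((s : ℤ) + t - j) - (j : ℤ) * ((p : ℤ) - t)
      ≤ (((A ×ˢ B ×ˢ B).filter (fun x => x.2.2 = x.1 + x.2.1)).card : ℤ) := by
  subst hA hB
  have hcard : Fintype.card (ZMod p) = p := ZMod.card p
  have htp : B.card ≤ p := by simpa [card_univ, hcard] using card_le_univ B
  have hpol := pollard hp (min A.card B.card) A B j le_rfl hj1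
    (le_trans hj2 (min_le_left _ _)) (le_trans hj2 (min_le_right _ _))
  have hupper := NNN_le_sum_over A B j
  rw [hcard] at hupper
  have hlow : (∑ c ∈ B, min j (rrr A B c)) ≤ ∑ c ∈ B, rrr A B c :=
    Finset.sum_le_sum (fun c _ => min_le_right _ _)
  rw [count_triples A B]
  -- now all in ℕ except casts
  have hmain : j * min p (A.card + B.card - j) ≤ (∑ c ∈ B, rrr A B c) + (p - B.card) * j := by
    omega
  have hc1 : ((min p (A.card + B.card - j) : ℕ) : ℤ)
      = min (p : ℤ) ((A.card : ℤ) + B.card - j) := by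
    rw [Nat.cast_min, Nat.cast_sub (by omega : j ≤ A.card + B.card)]
    push_cast
    ring_nf
  have hc2 : (((p - B.card) * j : ℕ) : ℤ) = ((p : ℤ) - B.card) * j := by
    rw [Nat.cast_mul, Nat.cast_sub htp]
  have hz : (j : ℤ) * ((min p (A.card + B.card - j) : ℕ) : ℤ)
      ≤ (((∑ c ∈ B, rrr A B c) : ℕ) : ℤ) + (((p - B.card) * j : ℕ) : ℤ) := by
    exact_mod_cast hmain
  rw [hc1, hc2] at hz
  linarith
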